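/- Let M > 0, let x, x' ∈ ℝ³ and t' ∈ ℝ with 0 < ‖x‖ < 2M, Q_M(t', x', x) = −1, and ⟨x, x'⟩ > 0, and set r := ‖x‖ and ṙ := ⟨x, x'⟩/‖x‖. Then ṙ ≥ √((2M − r)/(2M)) · √(1 + ‖x'‖²) and ṙ ≥ ((2M − r)/√(2M·r)) · |t'|. -/

import Mathlib

/-- The Schwarzschild quadratic form of mass `M`, evaluated on a velocity `(t', x')`
at a point with spatial part `x` (where `0 < ‖x‖ < 2M`). -/
noncomputable def QM (M : ℝ) (t' : ℝ) (x' x : EuclideanSpace ℝ (Fin 3)) : ℝ :=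
  (2 * M / ‖x‖ - 1) * t' ^ 2 + ‖x'‖ ^ 2
    - (2 * M / ((2 * M - ‖x‖) * ‖x‖ ^ 2)) * (inner ℝ x x' : ℝ) ^ 2

/-- Let `M > 0`, let `x, x' ∈ ℝ³` and `t' ∈ ℝ` with `0 < ‖x‖ < 2M`,
`Q_M(t', x', x) = −1`, and `⟨x, x'⟩ > 0`, and set `r := ‖x‖` and `ṙ := ⟨x, x'⟩/‖x‖`.
Then `ṙ ≥ √((2M − r)/(2M)) · √(1 + ‖x'‖²)` and `ṙ ≥ ((2M − r)/√(2M·r)) · |t'|`. -/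
theorem radial_rate_lower_bounds (M : ℝ) (hM : 0 < M)
    (x x' : EuclideanSpace ℝ (Fin 3)) (t' : ℝ)
    (h1 : 0 < ‖x‖) (h2 : ‖x‖ < 2 * M)
    (hQ : QM M t' x' x = -1) (hpd : (0 : ℝ) < inner ℝ x x') :
    Real.sqrt ((2 * M - ‖x‖) / (2 * M)) * Real.sqrt (1 + ‖x'‖ ^ 2)
        ≤ (inner ℝ x x' : ℝ) / ‖x‖ ∧
      ((2 * M - ‖x‖) / Real.sqrt (2 * M * ‖x‖)) * |t'| ≤ (inner ℝ x x' : ℝ) / ‖x‖ := by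
  set r := ‖x‖ with hrdef
  set p : ℝ := inner ℝ x x' with hpdef
  have h2r : 0 < 2 * M - r := by linarith
  have hM2 : (0:ℝ) < 2 * M := by linarith
  have hpr : 0 < p / r := div_pos hpd h1
  unfold QM at hQ
  rw [← hrdef, ← hpdef] at hQ
  have key : p ^ 2 * (2 * M) = (2 * M - r) * ((2 * M - r) * r * t' ^ 2 + r ^ 2 * (1 + ‖x'‖ ^ 2)) := by
    field_simp at hQ
    nlinarith [hQ]
  have hsq : ((2 * M - r) / (2 * M)) * (1 + ‖x'‖ ^ 2) ≤ (p / r) ^ 2 := by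
    rw [div_pow, div_mul_eq_mul_div, div_le_div_iff₀ (by positivity) (by positivity)]
    nlinarith [key, mul_nonneg h1.le (sq_nonneg ((2 * M - r) * t'))]
  have hsq2 : (2 * M - r) ^ 2 / (2 * M * r) * t' ^ 2 ≤ (p / r) ^ 2 := by
    rw [div_pow, div_mul_eq_mul_div, div_le_div_iff₀ (by positivity) (by positivity)]
    nlinarith [key, mul_nonneg (mul_nonneg h2r.le (sq_nonneg r)) (by positivity : (0:ℝ) ≤ (1 + ‖x'‖ ^ 2) * r), h1]
  constructor
  · calc Real.sqrt ((2 * M - r) / (2 * M)) * Real.sqrt (1 + ‖x'‖ ^ 2)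
        = Real.sqrt (((2 * M - r) / (2 * M)) * (1 + ‖x'‖ ^ 2)) := (Real.sqrt_mul (by positivity) _).symm
      _ ≤ Real.sqrt ((p / r) ^ 2) := Real.sqrt_le_sqrt hsq
      _ = p / r := Real.sqrt_sq hpr.le
  · have hLnn : 0 ≤ (2 * M - r) / Real.sqrt (2 * M * r) * |t'| := by positivity
    have hL2 : ((2 * M - r) / Real.sqrt (2 * M * r) * |t'|) ^ 2
        = (2 * M - r) ^ 2 / (2 * M * r) * t' ^ 2 := by
      rw [mul_pow, div_pow, Real.sq_sqrt (by positivity), sq_abs]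
    calc (2 * M - r) / Real.sqrt (2 * M * r) * |t'|
        = Real.sqrt (((2 * M - r) / Real.sqrt (2 * M * r) * |t'|) ^ 2) := (Real.sqrt_sq hLnn).symm
      _ ≤ Real.sqrt ((p / r) ^ 2) := Real.sqrt_le_sqrt (by rw [hL2]; exact hsq2)
      _ = p / r := Real.sqrt_sq hpr.le
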